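/- arXiv:1605.08018 — 7 statements merged into one kernel-verified Lean document; each statement's English description precedes it below -/
import Mathlib

section
/- Let 0 → C' → C → C'' → 0 be a short exact sequence of R-modules. (a) If C' and C'' are S-contramodules, then C is an S-contramodule. (b) If C is an S-contramodule, then C'' is S-h-reduced if and only if C' is an S-contramodule. -/
open CategoryTheory

/-- `Ext^n_R(M, N)` for `R`-modules `M`, `N`. -/
noncomputable def extGroup (R : Type) [CommRing R] (M N : Type) [AddCommGroup M] [Module R M]
    [AddCommGroup N] [Module R N] (n : ℕ) : Type :=
  ((Ext R (ModuleCat R) n).obj (Opposite.op (ModuleCat.of R M))).obj (ModuleCat.of R N)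

/-- An `R`-module `C` is S-h-reduced if `Hom_R(S⁻¹R, C) = 0`. -/
def IsSHReduced (R : Type) [CommRing R] (S : Submonoid R)
    (C : Type) [AddCommGroup C] [Module R C] : Prop :=
  ∀ f : Localization S →ₗ[R] C, f = 0

/-- An `R`-module `C` is an S-contramodule if `Hom_R(S⁻¹R, C) = 0 = Ext^1_R(S⁻¹R, C)`. -/
def IsSContramodule (R : Type) [CommRing R] (S : Submonoid R)
    (C : Type) [AddCommGroup C] [Module R C] : Prop :=
  IsSHReduced R S C ∧ Subsingleton (extGroup R (Localization S) C 1)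

open CategoryTheory Limits

namespace ContraAux

variable {R : Type} [CommRing R]

/-- The underlying equivalence of types of an isomorphism of modules. -/
noncomputable def isoEquiv {M N : ModuleCat.{0} R} (e : M ≅ N) : M ≃ N :=
  ((forget (ModuleCat R)).mapIso e).toEquiv

lemma subsingleton_X₂ (T : ShortComplex (ModuleCat.{0} R)) (hT : T.Exact)
    (h₁ : Subsingleton T.X₁) (h₃ : Subsingleton T.X₃) : Subsingleton T.X₂ := by
  rw [ShortComplex.moduleCat_exact_iff] at hT
  refine (subsingleton_iff_forall_eq 0).2 fun x => ?_
  obtain ⟨y, hy⟩ := hT x (Subsingleton.elim _ _)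
  rw [← hy, Subsingleton.elim y 0, map_zero]

section

variable {X : ModuleCat.{0} R} (P : ProjectiveResolution X) (Y : ModuleCat.{0} R)

/-- `Hom(X, Y)` is in bijection with the `0`-th homology of `Hom(P_•, Y)`. -/
noncomputable def homEquiv :
    (X ⟶ Y) ≃ ((P.complex.linearYonedaObj R Y).homology 0) := by
  set K := P.complex.linearYonedaObj R Y with hK
  set T := K.sc' 0 0 1 with hT
  have e1 : K.homology 0 ≅ T.homology :=
    ShortComplex.homologyMapIso (K.isoSc' 0 0 1 (by simp) (by simp))
  have e2 : T.homology ≅ T.moduleCatLeftHomologyData.H := T.moduleCatHomologyIso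
  have hbot : LinearMap.range T.moduleCatToCycles = ⊥ := by
    rw [LinearMap.range_eq_bot]
    ext x
    have h0 : T.f = 0 := K.shape _ _ (by simp)
    simp only [ShortComplex.moduleCatToCycles, LinearMap.codRestrict_apply, h0]
    rfl
  have e3 : (LinearMap.ker T.g.hom ⧸ LinearMap.range T.moduleCatToCycles) ≃ₗ[R]
      LinearMap.ker T.g.hom := Submodule.quotEquivOfEqBot _ hbot
  have hc := P.isColimitCokernelCofork
  have hg : ∀ (φ : P.complex.X 0 ⟶ Y), T.g.hom φ = P.complex.d 1 0 ≫ φ := fun _ => rfl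
  refine Equiv.trans (Equiv.trans ?_ e3.toEquiv.symm) (isoEquiv (e1 ≪≫ e2)).symm
  refine
    { toFun := fun f => ⟨P.π.f 0 ≫ f, LinearMap.mem_ker.2 ((hg _).trans (by exact (Category.assoc _ _ _).symm.trans ((congrArg (· ≫ f) P.complex_d_comp_π_f_zero).trans zero_comp)))
    
      ⟩
      invFun := fun g => hc.desc (CokernelCofork.ofπ g.1 (by exact (hg g.1).symm.trans g.2))
      left_inv := fun f => Cofork.IsColimit.hom_ext hc
        (by rw [Cofork.IsColimit.π_desc hc]; rfl)
      right_inv := fun g => Subtype.ext (Cofork.IsColimit.π_desc hc) }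

end
section
variable {X : ModuleCat.{0} R} (P : ProjectiveResolution X)

/-- Postcomposition map on `Hom(P_•, -)`. -/
noncomputable def mapHcx {Y₁ Y₂ : ModuleCat.{0} R} (w : Y₁ ⟶ Y₂) :
    P.complex.linearYonedaObj R Y₁ ⟶ P.complex.linearYonedaObj R Y₂ where
  f n := ModuleCat.ofHom (Linear.rightComp R _ w)
  comm' := by intro n m h; ext φ; rfl

/-- The short complex of cochain complexes `Hom(P_•, Sc)`. -/
noncomputable def hcxShortComplex (Sc : ShortComplex (ModuleCat.{0} R)) :
    ShortComplex (CochainComplex (ModuleCat.{0} R) ℕ) :=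
  ShortComplex.mk (mapHcx P Sc.f) (mapHcx P Sc.g) (by
    ext n φ
    revert φ
    show ∀ φ : P.complex.X n ⟶ Sc.X₁, (φ ≫ Sc.f) ≫ Sc.g = 0
    intro φ
    rw [Category.assoc, Sc.zero, Limits.comp_zero])

lemma hcxShortComplex_shortExact (Sc : ShortComplex (ModuleCat.{0} R))
    (hSc : Sc.ShortExact) : (hcxShortComplex P Sc).ShortExact := by
  rw [HomologicalComplex.shortExact_iff_degreewise_shortExact]
  intro n
  have hinj := hSc.moduleCat_injective_f
  have epi_g := hSc.epi_g
  have hrk := hSc.exact.moduleCat_range_eq_ker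
  have mono_f : Mono (((hcxShortComplex P Sc).map
      (HomologicalComplex.eval (ModuleCat R) (ComplexShape.up ℕ) n)).f) := by
    rw [ModuleCat.mono_iff_injective]
    intro φ ψ h
    refine ModuleCat.hom_ext (LinearMap.ext (fun x => hinj ?_))
    exact congrArg (fun (χ : P.complex.X n ⟶ Sc.X₂) => χ x) h
  have epi_g : Epi (((hcxShortComplex P Sc).map
      (HomologicalComplex.eval (ModuleCat R) (ComplexShape.up ℕ) n)).g) := by
    rw [ModuleCat.epi_iff_surjective]
    intro ψ
    exact ⟨Projective.factorThru ψ Sc.g, (Projective.factorThru_comp ψ Sc.g :)⟩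
  refine ⟨?_⟩
  rw [ShortComplex.moduleCat_exact_iff]
  intro φ' hφ'
  obtain ⟨φ, rfl⟩ : ∃ φ : P.complex.X n ⟶ Sc.X₂, φ = φ' := ⟨φ', rfl⟩
  have hmem : ∀ x, φ x ∈ LinearMap.range Sc.f.hom := by
    intro x
    rw [hrk, LinearMap.mem_ker]
    exact congrArg (fun (χ : P.complex.X n ⟶ Sc.X₃) => χ x) hφ'
  refine ⟨ModuleCat.ofHom ((LinearEquiv.ofInjective Sc.f.hom hinj).symm.toLinearMap.comp
    (LinearMap.codRestrict _ φ.hom hmem)), ?_⟩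
  show _ ≫ Sc.f = φ
  refine ModuleCat.hom_ext (LinearMap.ext (fun x => ?_))
  show Sc.f ((LinearEquiv.ofInjective Sc.f.hom hinj).symm ⟨φ x, hmem x⟩) = φ x
  exact congrArg Subtype.val
    ((LinearEquiv.ofInjective Sc.f.hom hinj).apply_symm_apply ⟨φ x, hmem x⟩)

end

end ContraAux

open ContraAux in
/-- For a short exact sequence `0 → C' → C → C'' → 0`:
(a) if `C'` and `C''` are S-contramodules then so is `C`; (b) if `C` is an
S-contramodule, then `C''` is S-h-reduced iff `C'` is an S-contramodule. -/
theorem contramodule_short_exact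
    (R : Type) [CommRing R] (S : Submonoid R)
    (C' C C'' : Type) [AddCommGroup C'] [Module R C'] [AddCommGroup C] [Module R C]
    [AddCommGroup C''] [Module R C'']
    (i : C' →ₗ[R] C) (p : C →ₗ[R] C'')
    (hi : Function.Injective i) (hp : Function.Surjective p)
    (hexact : LinearMap.range i = LinearMap.ker p) :
    (IsSContramodule R S C' → IsSContramodule R S C'' → IsSContramodule R S C) ∧
    (IsSContramodule R S C →
      (IsSHReduced R S C'' ↔ IsSContramodule R S C')) := by
  classical
  let X : ModuleCat.{0} R := ModuleCat.of R (Localization S)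
  let P : ProjectiveResolution X := projectiveResolution X
  let Sc : ShortComplex (ModuleCat.{0} R) :=
    ShortComplex.mk (X₁ := ModuleCat.of R C') (X₂ := ModuleCat.of R C)
      (X₃ := ModuleCat.of R C'') (ModuleCat.ofHom i) (ModuleCat.ofHom p)
      (by
        refine ModuleCat.hom_ext (LinearMap.ext (fun x => ?_))
        show p (i x) = 0
        rw [← LinearMap.mem_ker, ← hexact]
        exact ⟨x, rfl⟩)
  have hmono : Mono Sc.f := (ModuleCat.mono_iff_injective _).2 hi
  have hepi : Epi Sc.g := (ModuleCat.epi_iff_surjective _).2 hp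
  have hSc : Sc.ShortExact :=
    { exact := (ShortComplex.moduleCat_exact_iff_range_eq_ker _).2 hexact }
  have hSk := hcxShortComplex_shortExact P Sc hSc
  -- translation between `IsSHReduced` and the 0-th homology
  have HredIff : ∀ (M : Type) [AddCommGroup M] [Module R M], IsSHReduced R S M ↔
      Subsingleton ((P.complex.linearYonedaObj R (ModuleCat.of R M)).homology 0) := by
    intro M _ _
    have h1 : IsSHReduced R S M ↔ Subsingleton (X ⟶ ModuleCat.of R M) := by
      constructor
      · intro h
        exact (subsingleton_iff_forall_eq 0).2 fun f => ModuleCat.hom_ext (h f.hom)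
      · intro h f
        exact congrArg ModuleCat.Hom.hom (@Subsingleton.elim (X ⟶ ModuleCat.of R M) h (ModuleCat.ofHom f) 0)
    rw [h1]
    exact (homEquiv P (ModuleCat.of R M)).subsingleton_congr
  have ExtIff : ∀ (M : Type) [AddCommGroup M] [Module R M],
      Subsingleton (extGroup R (Localization S) M 1) ↔
      Subsingleton ((P.complex.linearYonedaObj R (ModuleCat.of R M)).homology 1) := by
    intro M _ _
    exact (isoEquiv (P.isoExt 1 (ModuleCat.of R M))).subsingleton_congr
  have hr : (ComplexShape.up ℕ).Rel 0 1 := rfl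
  have E0 := hSk.homology_exact₂ 0
  have E1 := hSk.homology_exact₂ 1
  have E2 := hSk.homology_exact₁ 0 1 hr
  have E3 := hSk.homology_exact₃ 0 1 hr
  constructor
  · rintro ⟨h'red, h'ext⟩ ⟨h''red, h''ext⟩
    constructor
    · exact (HredIff C).2 (subsingleton_X₂ _ E0 ((HredIff C').1 h'red)
        ((HredIff C'').1 h''red))
    · exact (ExtIff C).2 (subsingleton_X₂ _ E1 ((ExtIff C').1 h'ext)
        ((ExtIff C'').1 h''ext))
  · rintro ⟨hCred, hCext⟩
    constructor
    · intro hred''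
      constructor
      · intro f
        have h0 : i.comp f = 0 := hCred (i.comp f)
        refine LinearMap.ext (fun x => hi ?_)
        simpa using congrArg (fun (g : Localization S →ₗ[R] C) => g x) h0
      · exact (ExtIff C').2 (subsingleton_X₂ _ E2 ((HredIff C'').1 hred'')
          ((ExtIff C).1 hCext))
    · rintro ⟨h'red, h'ext⟩
      exact (HredIff C'').2 (subsingleton_X₂ _ E3 ((HredIff C).1 hCred)
        ((ExtIff C').1 h'ext))
end

section
/- Any R-module annihilated by some element of S is a strong S-contramodule, i.e., Ext^n_R(S⁻¹R, C) = 0 for all n ≥ 0 whenever there exists r ∈ S with rC = 0. -/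
open CategoryTheory Opposite

/-- Any `R`-module annihilated by an element of `S` is a strong S-contramodule:
`Ext^n_R(S⁻¹R, C) = 0` for all `n ≥ 0`. -/
theorem annihilated_is_strong_contramodule
    (R : Type) [CommRing R] (S : Submonoid R)
    (C : Type) [AddCommGroup C] [Module R C]
    (r : R) (hr : r ∈ S) (hann : ∀ c : C, r • c = 0) :
    ∀ n : ℕ, Subsingleton (extGroup R (Localization S) C n) := by
  intro n
  let M := ModuleCat.of R (Localization S)
  let Y := ModuleCat.of R C
  let F : ModuleCat R ⥤ (ModuleCat R)ᵒᵖ := ((linearYoneda R (ModuleCat R)).obj Y).rightOp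
  let f : M ⟶ M := r • 𝟙 M
  -- the inverse of f : multiplication by 1/r
  let c : Localization S := IsLocalization.mk' (Localization S) 1 ⟨r, hr⟩
  have hc : r • c = 1 := by
    show r • IsLocalization.mk' (Localization S) 1 ⟨r, hr⟩ = 1
    rw [IsLocalization.smul_mk', mul_one]
    exact IsLocalization.mk'_self (Localization S) hr
  let g : M ⟶ M := ModuleCat.ofHom (LinearMap.mulLeft R c)
  have hfg : f ≫ g = 𝟙 M := by
    ext (x : Localization S)
    show c * (r • x) = x
    rw [mul_smul_comm, ← smul_mul_assoc, hc, one_mul]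
  have hgf : g ≫ f = 𝟙 M := by
    ext (x : Localization S)
    show r • (c * x) = x
    rw [← smul_mul_assoc, hc, one_mul]
  haveI hf : IsIso f := ⟨g, hfg, hgf⟩
  obtain ⟨P⟩ := (inferInstance : HasProjectiveResolution M).out
  -- the chain map r • 𝟙 lifts f, and F kills it
  have hzero : (F.mapHomologicalComplex _ ⋙
      HomologicalComplex.homologyFunctor _ _ n).map (r • 𝟙 P.complex) = 0 := by
    have : (F.mapHomologicalComplex _).map (r • 𝟙 P.complex) = 0 := by
      ext i
      show F.map ((r • 𝟙 P.complex).f i) = 0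
      rw [HomologicalComplex.smul_f_apply]
      have : ((linearYoneda R (ModuleCat R)).obj Y).map (r • 𝟙 (P.complex.X i)).op = 0 := by
        ext (φ : P.complex.X i ⟶ Y)
        show (r • 𝟙 (P.complex.X i)) ≫ φ = 0
        rw [Linear.smul_comp, Category.id_comp]
        ext x
        exact hann (φ x)
      show (((linearYoneda R (ModuleCat R)).obj Y).map (r • 𝟙 (P.complex.X i)).op).op = 0
      rw [this]
      rfl
    rw [Functor.comp_map, this, Functor.map_zero]
  have comm : (r • 𝟙 P.complex).f 0 ≫ P.π.f 0 = P.π.f 0 ≫ (r • 𝟙 M) := by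
    simp
    ext x
    exact ((P.π.f 0).hom.map_smul r x)
  have hnat := ProjectiveResolution.isoLeftDerivedObj_hom_naturality f P P
    (r • 𝟙 P.complex) comm F n
  rw [hzero, Limits.comp_zero] at hnat
  have key : (F.leftDerived n).map f = 0 := by
    rw [← cancel_mono (P.isoLeftDerivedObj F n).hom, hnat, Limits.zero_comp]
  haveI hiso : IsIso ((F.leftDerived n).map f) := inferInstance
  haveI hiso0 : IsIso (0 : (F.leftDerived n).obj M ⟶ (F.leftDerived n).obj M) := key ▸ hiso
  have hid : 𝟙 ((F.leftDerived n).obj M) = 0 := by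
    rw [← IsIso.inv_hom_id (0 : (F.leftDerived n).obj M ⟶ (F.leftDerived n).obj M),
      Limits.comp_zero]
  -- conclude
  set E : ModuleCat R := unop ((F.leftDerived n).obj M) with hE
  have hid' : 𝟙 E = (0 : E ⟶ E) := congrArg Quiver.Hom.unop hid
  show Subsingleton ↑E
  refine subsingleton_of_forall_eq 0 fun x => ?_
  have h1 := DFunLike.congr_fun (congrArg ModuleCat.Hom.hom hid') x
  simpa using h1
end

section
/- If S is a countable multiplicative subset of a commutative ring R, then the projective dimension of the R-module S⁻¹R is at most 1. -/
section Aux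

variable {R : Type} [CommRing R] {S : Submonoid R} (s : ℕ → S)

/-- partial products of the enumeration -/
noncomputable def locT (n : ℕ) : S := ∏ k ∈ Finset.range n, s k

lemma locT_zero : locT s 0 = 1 := Finset.prod_range_zero _

lemma locT_succ (n : ℕ) : locT s (n + 1) = locT s n * s n := Finset.prod_range_succ _ _

/-- the surjection from the free module -/
noncomputable def locF : (ℕ →₀ R) →ₗ[R] Localization S :=
  Finsupp.linearCombination R fun n => Localization.mk 1 (locT s n)

/-- the telescope map -/
noncomputable def locD : (ℕ →₀ R) →ₗ[R] (ℕ →₀ R) :=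
  Finsupp.linearCombination R fun n =>
    Finsupp.single n 1 - Finsupp.single (n + 1) (s n : R)

lemma locD_apply_zero (x : ℕ →₀ R) : locD s x 0 = x 0 := by
  induction x using Finsupp.induction_linear with
  | zero => simp
  | add a b ha hb => simp [ha, hb]
  | single a b =>
    simp only [locD, Finsupp.linearCombination_single, smul_sub, Finsupp.smul_single,
      Finsupp.sub_apply, Finsupp.single_apply]
    simp

lemma locD_apply_succ (x : ℕ →₀ R) (n : ℕ) :
    locD s x (n + 1) = x (n + 1) - (s n : R) * x n := by
  induction x using Finsupp.induction_linear with
  | zero => simp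
  | add a b ha hb => simp [ha, hb]; ring
  | single a b =>
    simp only [locD, Finsupp.linearCombination_single, smul_sub, Finsupp.smul_single,
      Finsupp.sub_apply, Finsupp.single_apply, smul_eq_mul, mul_one]
    by_cases h1 : a = n + 1 <;> by_cases h2 : a = n
    · omega
    · simp [h1, h2]
    · simp [h1, h2, mul_comm]
    · simp [h1, h2]

lemma locD_injective : Function.Injective (locD s) := by
  rw [← LinearMap.ker_eq_bot, LinearMap.ker_eq_bot']
  intro x hx
  have h : ∀ n, x n = 0 := by
    intro n
    induction n with
    | zero => have := locD_apply_zero s x; rw [hx] at this; simpa using this.symm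
    | succ n ih =>
      have := locD_apply_succ s x n
      rw [hx, ih] at this
      simpa using this.symm
  ext n; exact h n

lemma locF_comp_locD : (locF s (R := R)).comp (locD s) = 0 := by
  apply Finsupp.lhom_ext
  intro n r
  simp only [LinearMap.comp_apply, locD, locF, Finsupp.linearCombination_single,
    LinearMap.zero_apply, map_smul, map_sub, one_smul]
  rw [Localization.smul_mk, smul_eq_mul, mul_one, locT_succ]
  rw [show Localization.mk ((s n : R)) (locT s n * s n) = Localization.mk 1 (locT s n) by
    rw [Localization.mk_eq_mk_iff]; exact Localization.r_of_eq (by push_cast; ring)]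
  simp

lemma locSum (y : ℕ →₀ R) (a : ℕ → R) (ha0 : a 0 = y 0)
    (hasucc : ∀ n, a (n + 1) = y (n + 1) + (s n : R) * a n) (n : ℕ) :
    ∑ k ∈ Finset.range (n + 1), Localization.mk (y k) (locT s k) =
      Localization.mk (a n) (locT s n) := by
  induction n with
  | zero => simp [ha0]
  | succ n ih =>
    rw [Finset.sum_range_succ, ih, hasucc]
    rw [show Localization.mk (a n) (locT s n)
        = Localization.mk ((s n : R) * a n) (locT s (n+1)) by
      rw [Localization.mk_eq_mk_iff]; refine Localization.r_of_eq ?_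
      rw [locT_succ]; push_cast; ring]
    rw [Localization.add_mk_self, add_comm]

lemma locF_eq_sum (y : ℕ →₀ R) (n : ℕ) (hsupp : y.support ⊆ Finset.range n) :
    locF s y = ∑ k ∈ Finset.range n, Localization.mk (y k) (locT s k) := by
  rw [locF, Finsupp.linearCombination_apply, Finsupp.sum]
  rw [Finset.sum_subset hsupp]
  · refine Finset.sum_congr rfl fun k _ => ?_
    rw [Localization.smul_mk, smul_eq_mul, mul_one]
  · intro k _ hk
    rw [Finsupp.notMem_support_iff.1 hk, zero_smul]

lemma ker_locF_le_range_locD (hs : ∀ (u : S) (N : ℕ), ∃ n, N ≤ n ∧ s n = u) :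
    LinearMap.ker (locF s (R := R)) ≤ LinearMap.range (locD s) := by
  intro y hy
  rw [LinearMap.mem_ker] at hy
  -- the recursively defined candidate coefficients
  set a : ℕ → R := fun n => Nat.rec (y 0) (fun n an => y (n + 1) + (s n : R) * an) n with ha
  have ha0 : a 0 = y 0 := rfl
  have hasucc : ∀ n, a (n + 1) = y (n + 1) + (s n : R) * a n := fun n => rfl
  -- a bound on the support
  set N : ℕ := y.support.sup id with hN
  have hsupp : y.support ⊆ Finset.range (N + 1) := by
    intro k hk
    simp only [Finset.mem_range, Nat.lt_succ_iff]
    exact Finset.le_sup (f := id) hk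
  have hyzero : ∀ k, N < k → y k = 0 := by
    intro k hk
    by_contra h
    have := hsupp (Finsupp.mem_support_iff.2 h)
    simp only [Finset.mem_range, Nat.lt_succ_iff] at this
    omega
  -- mk (a N) (t N) = 0
  have hmk : Localization.mk (a N) (locT s N) = 0 := by
    rw [← locSum s y a ha0 hasucc N, ← locF_eq_sum s y (N + 1) hsupp, hy]
  -- extract an annihilator
  rw [Localization.mk_eq_mk'_apply, IsLocalization.mk'_eq_zero_iff] at hmk
  obtain ⟨u, hu⟩ := hmk
  obtain ⟨m, hmN, hmu⟩ := hs u N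
  -- a is a multiple of a N beyond N
  have hmul : ∀ j, a (N + j) = (∏ i ∈ Finset.range j, (s (N + i) : R)) * a N := by
    intro j
    induction j with
    | zero => simp
    | succ j ih =>
      rw [show N + (j + 1) = (N + j) + 1 by ring, hasucc, ih,
        hyzero _ (by omega), Finset.prod_range_succ]
      ring
  have ham : a (m + 1) = 0 := by
    have h1 : a m = (∏ i ∈ Finset.range (m - N), (s (N + i) : R)) * a N := by
      have := hmul (m - N)
      rwa [show N + (m - N) = m by omega] at this
    have h2 : (s m : R) * a N = 0 := by rw [hmu]; exact hu
    rw [hasucc, hyzero _ (by omega), zero_add, h1]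
    calc (s m : R) * ((∏ i ∈ Finset.range (m - N), (s (N + i) : R)) * a N)
        = (∏ i ∈ Finset.range (m - N), (s (N + i) : R)) * ((s m : R) * a N) := by ring
      _ = 0 := by rw [h2, mul_zero]
  have hzero : ∀ j, m + 1 ≤ j → a j = 0 := by
    intro j hj
    induction j with
    | zero => omega
    | succ j ih =>
      rcases Nat.lt_or_ge (m + 1) (j + 1) with h | h
      · rw [hasucc, ih (by omega), hyzero _ (by omega), mul_zero, add_zero]
      · have : j + 1 = m + 1 := by omega
        rw [this]; exact ham
  -- build the preimage
  refine ⟨Finsupp.onFinset (Finset.range (m + 1)) a ?_, ?_⟩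
  · intro j hj
    simp only [Finset.mem_range]
    by_contra h
    exact hj (hzero j (by omega))
  · ext k
    cases k with
    | zero => rw [locD_apply_zero]; exact ha0
    | succ k =>
      rw [locD_apply_succ]
      simp only [Finsupp.onFinset_apply]
      rw [hasucc]; ring

end Aux

/-- `M` has projective dimension at most 1 over `R`: some (equivalently, any) surjection
onto `M` from a free module has projective kernel. -/
def HasProjDimLEOne (R : Type) [CommRing R] (M : Type) [AddCommGroup M] [Module R M] : Prop :=
  ∃ (ι : Type) (f : (ι →₀ R) →ₗ[R] M),
    Function.Surjective f ∧ Module.Projective R (LinearMap.ker f)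

/-- If `S` is a countable multiplicative subset of a commutative ring `R`, then the
projective dimension of the `R`-module `S⁻¹R` is at most 1. -/
theorem projDim_localization_le_one_of_countable
    (R : Type) [CommRing R] (S : Submonoid R) [Countable S] :
    HasProjDimLEOne R (Localization S) := by
  have : Nonempty S := ⟨1⟩
  obtain ⟨g, hg⟩ := exists_surjective_nat S
  set s : ℕ → S := fun n => g (Nat.unpair n).1 with hsdef
  have hs : ∀ (u : S) (N : ℕ), ∃ n, N ≤ n ∧ s n = u := by
    intro u N
    obtain ⟨k, hk⟩ := hg u
    refine ⟨Nat.pair k N, Nat.right_le_pair k N, ?_⟩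
    simp [hsdef, Nat.unpair_pair, hk]
  refine ⟨ℕ, locF s, ?_, ?_⟩
  · -- surjectivity
    intro z
    refine Localization.induction_on z ?_
    rintro ⟨r, u⟩
    obtain ⟨n, -, rfl⟩ := hs u 0
    refine ⟨Finsupp.single (n + 1) (r * (locT s n : R)), ?_⟩
    rw [locF, Finsupp.linearCombination_single, Localization.smul_mk, smul_eq_mul, mul_one,
      locT_succ, Localization.mk_eq_mk_iff]
    exact Localization.r_of_eq (by push_cast; ring)
  · -- projectivity of the kernel
    have hrange : LinearMap.range (locD s (R := R)) = LinearMap.ker (locF s) := by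
      apply le_antisymm
      · rintro _ ⟨x, rfl⟩
        rw [LinearMap.mem_ker, ← LinearMap.comp_apply, locF_comp_locD, LinearMap.zero_apply]
      · exact ker_locF_le_range_locD s hs
    have e : (ℕ →₀ R) ≃ₗ[R] LinearMap.ker (locF s (R := R)) :=
      (LinearEquiv.ofInjective (locD s) (locD_injective s)).trans
        (LinearEquiv.ofEq _ _ hrange)
    exact Module.Projective.of_equiv e
end

section
/- For every R-module A, the S-completion Λ_S(A) = lim_{s∈S} A/sA is S-separated, i.e., the intersection over all s ∈ S of the submodules s·Λ_S(A) is zero. -/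
open Submodule Pointwise

/-- The submodule `s·A` of an `R`-module `A`. -/
def smulTop (R : Type) [CommRing R] (s : R)
    (A : Type) [AddCommGroup A] [Module R A] : Submodule R A :=
  Ideal.span {s} • (⊤ : Submodule R A)

/-- The natural projection `A/tA → A/sA` when `s ∣ t`. -/
def transMap (R : Type) [CommRing R]
    (A : Type) [AddCommGroup A] [Module R A] (s t : R) (h : s ∣ t) :
    (A ⧸ smulTop R t A) →ₗ[R] A ⧸ smulTop R s A :=
  Submodule.mapQ _ _ LinearMap.id (by
    rw [Submodule.comap_id]
    exact Submodule.smul_mono (Ideal.span_singleton_le_span_singleton.mpr h) le_rfl)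

/-- The S-completion `Λ_S(A) = lim_{s ∈ S} A/sA`, realized as the submodule of compatible
families in `∏_{s ∈ S} A/sA`. -/
def sCompletion (R : Type) [CommRing R] (S : Submonoid R)
    (A : Type) [AddCommGroup A] [Module R A] :
    Submodule R (∀ s : S, A ⧸ smulTop R (s : R) A) where
  carrier := {x | ∀ (s t : S) (h : (s : R) ∣ (t : R)), transMap R A s t h (x t) = x s}
  add_mem' := by
    intro x y hx hy s t h
    rw [Pi.add_apply, Pi.add_apply, map_add, hx s t h, hy s t h]
  zero_mem' := by
    intro s t h
    rw [Pi.zero_apply, Pi.zero_apply, map_zero]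
  smul_mem' := by
    intro r x hx s t h
    rw [Pi.smul_apply, Pi.smul_apply, map_smul, hx s t h]

theorem mem_sCompletion (R : Type) [CommRing R] (S : Submonoid R)
    (A : Type) [AddCommGroup A] [Module R A]
    (x : ∀ s : S, A ⧸ smulTop R (s : R) A) :
    x ∈ sCompletion R S A ↔
      ∀ (s t : S) (h : (s : R) ∣ (t : R)), transMap R A s t h (x t) = x s :=
  Iff.rfl

/-- The natural map `λ_{S,A} : A → Λ_S(A)`. -/
def lamMap (R : Type) [CommRing R] (S : Submonoid R)
    (A : Type) [AddCommGroup A] [Module R A] :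
    A →ₗ[R] sCompletion R S A :=
  LinearMap.codRestrict (sCompletion R S A)
    (LinearMap.pi fun s : S => (smulTop R (s : R) A).mkQ)
    (by
      intro a s t h
      show transMap R A s t h ((smulTop R (t : R) A).mkQ a) = (smulTop R (s : R) A).mkQ a
      simp only [transMap, Submodule.mkQ_apply, Submodule.mapQ_apply, LinearMap.id_apply])

/-- For every `R`-module `A`, the S-completion `Λ_S(A)` is S-separated:
`⋂_{s ∈ S} s·Λ_S(A) = 0`. -/
theorem sCompletion_separated (R : Type) [CommRing R] (S : Submonoid R)
    (A : Type) [AddCommGroup A] [Module R A] :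
    (⨅ s : S, smulTop R (s : R) (sCompletion R S A)) = ⊥ := by
  rw [eq_bot_iff]
  intro x hx
  rw [Submodule.mem_iInf] at hx
  rw [Submodule.mem_bot]
  apply Subtype.ext
  funext s
  have h := hx s
  rw [smulTop] at h
  rw [Submodule.ideal_span_singleton_smul] at h
  have h' : (x : sCompletion R S A) ∈ (s : R) • ((⊤ : Submodule R (sCompletion R S A)) : Set (sCompletion R S A)) := by
    rw [← Submodule.coe_pointwise_smul]; exact h
  obtain ⟨y, -, rfl⟩ := Set.mem_smul_set.mp h'
  show (s : R) • (y.1 s) = (0 : A ⧸ smulTop R (s : R) A)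
  obtain ⟨a, ha⟩ := (smulTop R (s : R) A).mkQ_surjective (y.1 s)
  rw [← ha, Submodule.mkQ_apply, ← Submodule.Quotient.mk_smul, Submodule.Quotient.mk_eq_zero]
  unfold smulTop
  rw [Submodule.ideal_span_singleton_smul]
  exact Submodule.smul_mem_pointwise_smul a (s : R) ⊤ trivial
end

section
/- For any R-module A with S-completion Λ_S(A), the following are equivalent: (i) Λ_S(A) is S-complete; (iii) for every s ∈ S the kernel U_s of the projection Λ_S(A) → A/sA equals s·Λ_S(A); (vi) the cokernel of λ_{S,A} : A → Λ_S(A) is S-divisible. -/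
open Submodule

/- ---------------- auxiliary lemmas ---------------- -/

lemma mem_smulTop {R : Type} [CommRing R] {s : R}
    {A : Type} [AddCommGroup A] [Module R A] {a : A} :
    a ∈ smulTop R s A ↔ ∃ b : A, s • b = a := by
  constructor
  · intro h
    refine Submodule.smul_induction_on h ?_ ?_
    · rintro r hr n -
      obtain ⟨c, rfl⟩ := Ideal.mem_span_singleton.mp hr
      exact ⟨c • n, by rw [smul_smul, mul_comm]⟩
    · rintro x y ⟨b, rfl⟩ ⟨c, rfl⟩
      exact ⟨b + c, by rw [smul_add]⟩
  · rintro ⟨b, rfl⟩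
    exact Submodule.smul_mem_smul (Ideal.mem_span_singleton_self s) trivial

lemma smul_quot_zero {R : Type} [CommRing R] (s : R)
    {A : Type} [AddCommGroup A] [Module R A] (u : A ⧸ smulTop R s A) :
    s • u = 0 := by
  obtain ⟨a, rfl⟩ := Submodule.Quotient.mk_surjective _ u
  rw [← Submodule.Quotient.mk_smul, Submodule.Quotient.mk_eq_zero]
  exact mem_smulTop.mpr ⟨a, rfl⟩

lemma transMap_mk {R : Type} [CommRing R]
    {A : Type} [AddCommGroup A] [Module R A] (s t : R) (h : s ∣ t) (a : A) :
    transMap R A s t h (Submodule.Quotient.mk a) = Submodule.Quotient.mk a := by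
  simp only [transMap, Submodule.mapQ_apply, LinearMap.id_apply]

lemma lamMap_coe {R : Type} [CommRing R] {S : Submonoid R}
    {A : Type} [AddCommGroup A] [Module R A] (a : A) (t : S) :
    ((lamMap R S A a : sCompletion R S A) : ∀ s : S, A ⧸ smulTop R (s : R) A) t
      = Submodule.Quotient.mk a := rfl

/-- `sΛ ⊆ U_s`: the `s`-component of any element of `s • Λ` vanishes. -/
lemma comp_zero_of_mem_smulTop {R : Type} [CommRing R] {S : Submonoid R}
    {A : Type} [AddCommGroup A] [Module R A] {s : S}
    {x : sCompletion R S A}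
    (hx : x ∈ smulTop R (s : R) (sCompletion R S A)) :
    (x : ∀ t : S, A ⧸ smulTop R (t : R) A) s = 0 := by
  obtain ⟨y, rfl⟩ := mem_smulTop.mp hx
  rw [Submodule.coe_smul, Pi.smul_apply]
  exact smul_quot_zero _ _

/-- For any `R`-module `A`, the following are equivalent:
(i) `Λ_S(A)` is S-complete;
(iii) for every `s ∈ S` the kernel `U_s` of the projection `Λ_S(A) → A/sA` equals
`s·Λ_S(A)`;
(vi) the cokernel of `λ_{S,A} : A → Λ_S(A)` is S-divisible. -/
theorem sCompletion_complete_tfae (R : Type) [CommRing R] (S : Submonoid R)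
    (A : Type) [AddCommGroup A] [Module R A] :
    [ -- (i)
      Function.Surjective (lamMap R S (sCompletion R S A)),
      -- (iii)
      ∀ s : S, LinearMap.ker ((LinearMap.proj s).comp (sCompletion R S A).subtype)
        = smulTop R (s : R) (sCompletion R S A),
      -- (vi)
      ∀ s : S, Function.Surjective
        (fun x : (sCompletion R S A) ⧸ LinearMap.range (lamMap R S A) => (s : R) • x)
    ].TFAE := by
  tfae_have 1 → 3 := by
    intro h s q
    obtain ⟨x, rfl⟩ := Submodule.Quotient.mk_surjective _ q
    choose a ha using fun t : S => Submodule.Quotient.mk_surjective (smulTop R (t : R) A)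
      ((x : ∀ u : S, A ⧸ smulTop R (u : R) A) t)
    -- the compatible family of `λ(a t)`'s in `Λ_S(Λ)`
    have hz : (fun t : S => (Submodule.Quotient.mk (lamMap R S A (a t)) :
        sCompletion R S A ⧸ smulTop R (t : R) (sCompletion R S A)))
        ∈ sCompletion R S (sCompletion R S A) := by
      intro u v huv
      rw [transMap_mk, Submodule.Quotient.eq]
      have h1 : (Submodule.Quotient.mk (a v) : A ⧸ smulTop R (u : R) A)
          = Submodule.Quotient.mk (a u) := by
        have h2 := x.2 u v huv
        rw [← ha v, transMap_mk] at h2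
        rw [h2, ha u]
      obtain ⟨b, hb⟩ := mem_smulTop.mp ((Submodule.Quotient.eq _).mp h1)
      refine mem_smulTop.mpr ⟨lamMap R S A b, ?_⟩
      rw [← map_smul, hb, map_sub]
    obtain ⟨w, hw⟩ := h ⟨_, hz⟩
    have key : ∀ t : S, w - lamMap R S A (a t)
        ∈ smulTop R (t : R) (sCompletion R S A) := by
      intro t
      refine (Submodule.Quotient.eq _).mp ?_
      exact congrArg (fun v : sCompletion R S (sCompletion R S A) =>
        (v : ∀ u : S, sCompletion R S A ⧸ smulTop R (u : R) (sCompletion R S A)) t) hw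
    have hxw : x = w := by
      apply Subtype.ext
      funext t
      have h0 := comp_zero_of_mem_smulTop (key t)
      rw [Submodule.coe_sub, Pi.sub_apply, sub_eq_zero, lamMap_coe] at h0
      rw [h0]
      exact (ha t).symm
    obtain ⟨y, hy⟩ := mem_smulTop.mp (key s)
    refine ⟨Submodule.Quotient.mk y, ?_⟩
    show (s : R) • (Submodule.Quotient.mk y :
        sCompletion R S A ⧸ LinearMap.range (lamMap R S A)) = Submodule.Quotient.mk x
    rw [← Submodule.Quotient.mk_smul, hy, hxw, Submodule.Quotient.eq]
    rw [sub_sub_cancel_left]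
    exact (LinearMap.range (lamMap R S A)).neg_mem ⟨a s, rfl⟩
  tfae_have 3 → 2 := by
    intro h s
    apply le_antisymm
    · intro x hx
      rw [LinearMap.mem_ker, LinearMap.comp_apply, Submodule.subtype_apply,
        LinearMap.proj_apply] at hx
      obtain ⟨q, hq⟩ := h s (Submodule.Quotient.mk x)
      obtain ⟨y, rfl⟩ := Submodule.Quotient.mk_surjective _ q
      simp only at hq
      rw [← Submodule.Quotient.mk_smul] at hq
      obtain ⟨c, hc⟩ := (Submodule.Quotient.eq _).mp hq.symm
      -- hc : lamMap R S A c = x - s • y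
      have hc_s : c ∈ smulTop R (s : R) A := by
        have h1 := congrArg (fun v : sCompletion R S A =>
          (v : ∀ u : S, A ⧸ smulTop R (u : R) A) s) hc
        simp only [lamMap_coe, Submodule.coe_sub, Pi.sub_apply, Submodule.coe_smul,
          Pi.smul_apply, hx, smul_quot_zero, zero_sub, neg_zero] at h1
        simpa [Submodule.Quotient.mk_eq_zero] using h1
      obtain ⟨b, rfl⟩ := mem_smulTop.mp hc_s
      refine mem_smulTop.mpr ⟨lamMap R S A b + y, ?_⟩
      rw [smul_add, ← map_smul, hc]
      abel
    · intro x hx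
      rw [LinearMap.mem_ker, LinearMap.comp_apply, Submodule.subtype_apply,
        LinearMap.proj_apply]
      exact comp_zero_of_mem_smulTop hx
  tfae_have 2 → 1 := by
    intro h z
    choose w hw using fun t : S => Submodule.Quotient.mk_surjective
      (smulTop R (t : R) (sCompletion R S A))
      ((z : ∀ u : S, sCompletion R S A ⧸ smulTop R (u : R) (sCompletion R S A)) t)
    have hx : (fun t : S => (w t : ∀ u : S, A ⧸ smulTop R (u : R) A) t)
        ∈ sCompletion R S A := by
      intro u v huv
      have hcomp := (w v).2 u v huv
      rw [hcomp]
      have h1 : w v - w u ∈ smulTop R (u : R) (sCompletion R S A) := by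
        refine (Submodule.Quotient.eq _).mp ?_
        have h2 := z.2 u v huv
        rw [← hw v, transMap_mk, ← hw u] at h2
        exact h2
      have h0 := comp_zero_of_mem_smulTop h1
      rw [Submodule.coe_sub, Pi.sub_apply, sub_eq_zero] at h0
      exact h0
    refine ⟨⟨_, hx⟩, ?_⟩
    apply Subtype.ext
    funext t
    show (Submodule.Quotient.mk ⟨_, hx⟩ :
        sCompletion R S A ⧸ smulTop R (t : R) (sCompletion R S A))
      = (z : ∀ u : S, sCompletion R S A ⧸ smulTop R (u : R) (sCompletion R S A)) t
    rw [← hw t, Submodule.Quotient.eq, ← h t, LinearMap.mem_ker, LinearMap.comp_apply,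
      Submodule.subtype_apply, LinearMap.proj_apply]
    simp
  tfae_finish
end

section
/- Suppose the S-torsion in R is bounded, i.e., there exists r ∈ S with r·Γ_S(R) = 0. Then for every injective R-module J, the natural map J → S⁻¹J is surjective; consequently the quotient J/Γ_S(J) is a module over S⁻¹R. -/
/-- If the S-torsion in `R` is bounded (some `r ∈ S` annihilates `Γ_S(R)`), then for every
injective `R`-module `J` the natural map `J → S⁻¹J` is surjective; consequently
`J/Γ_S(J)` is a module over `S⁻¹R`, i.e. every `s ∈ S` acts bijectively on it. -/
theorem injective_localization_surjective_of_bounded_torsion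
    (R : Type) [CommRing R] (S : Submonoid R)
    (hbdd : ∃ r : S, ∀ x ∈ Submodule.torsion' R R S, (r : R) • x = 0)
    (J : Type) [AddCommGroup J] [Module R J] (hJ : Module.Injective R J) :
    Function.Surjective (LocalizedModule.mkLinearMap S J) ∧
    (∀ s : S, Function.Bijective
      (fun x : J ⧸ Submodule.torsion' R J S => (s : R) • x)) := by
  obtain ⟨r, hr⟩ := hbdd
  have key : ∀ (x : J) (s : S), ∃ y : J, (r : R) • (s : R) • y = (r : R) • x := by
    intro x s
    set φ : R →ₗ[R] R := LinearMap.toSpanSingleton R R ((r : R) * (s : R))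
    set ψ : R →ₗ[R] J := LinearMap.toSpanSingleton R J ((r : R) • x)
    have hle : LinearMap.ker φ ≤ LinearMap.ker ψ := by
      intro c hc
      simp only [LinearMap.mem_ker, φ, LinearMap.toSpanSingleton_apply] at hc
      have hcT : c ∈ Submodule.torsion' R R S := by
        rw [Submodule.mem_torsion'_iff]
        refine ⟨⟨(r : R) * (s : R), mul_mem r.2 s.2⟩, ?_⟩
        simpa [smul_eq_mul, mul_comm] using hc
      have : (r : R) * c = 0 := hr c hcT
      simp only [LinearMap.mem_ker, ψ, LinearMap.toSpanSingleton_apply,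
        smul_smul, mul_comm c (r : R), this, zero_smul]
    set g : LinearMap.range φ →ₗ[R] J :=
      (Submodule.liftQ (LinearMap.ker φ) ψ hle) ∘ₗ
        (φ.quotKerEquivRange.symm : LinearMap.range φ →ₗ[R] R ⧸ LinearMap.ker φ)
    obtain ⟨h, hh⟩ := hJ.out (LinearMap.range φ).subtype
      (Submodule.injective_subtype _) g
    refine ⟨h 1, ?_⟩
    have hmem : (r : R) * (s : R) ∈ LinearMap.range φ :=
      ⟨1, by simp [φ, LinearMap.toSpanSingleton_apply]⟩
    have h1 : ((r : R) * (s : R)) • h 1 = h ((r : R) * (s : R)) := by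
      rw [← map_smul]; simp [smul_eq_mul]
    have h2 : h ((r : R) * (s : R)) = g ⟨(r : R) * (s : R), hmem⟩ := by
      have := hh ⟨(r : R) * (s : R), hmem⟩
      simpa using this
    have h3 : g ⟨(r : R) * (s : R), hmem⟩ = (r : R) • x := by
      have e1 : φ.quotKerEquivRange (Submodule.Quotient.mk 1) =
          ⟨(r : R) * (s : R), hmem⟩ := by
        ext
        rw [LinearMap.quotKerEquivRange_apply_mk]
        simp [φ, LinearMap.toSpanSingleton_apply]
      have e2 : φ.quotKerEquivRange.symm ⟨(r : R) * (s : R), hmem⟩ =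
          Submodule.Quotient.mk 1 := by
        rw [← e1, LinearEquiv.symm_apply_apply]
      simp only [g, LinearMap.comp_apply, LinearEquiv.coe_coe, e2,
        Submodule.liftQ_apply, ψ, LinearMap.toSpanSingleton_apply, one_smul]
    rw [smul_smul, h1, h2, h3]
  have hsurj : Function.Surjective (LocalizedModule.mkLinearMap S J) := by
    intro z
    induction z using LocalizedModule.induction_on with
    | _ x s =>
      obtain ⟨y, hy⟩ := key x s
      refine ⟨y, ?_⟩
      rw [LocalizedModule.mkLinearMap_apply, LocalizedModule.mk_eq]
      exact ⟨r, by simpa [Submonoid.smul_def] using hy⟩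
  refine ⟨hsurj, fun s => ⟨?_, ?_⟩⟩
  · -- injective
    have hinj : ∀ q : J ⧸ Submodule.torsion' R J S, (s : R) • q = 0 → q = 0 := by
      intro q hq
      obtain ⟨c, rfl⟩ := Submodule.Quotient.mk_surjective _ q
      rw [← Submodule.Quotient.mk_smul, Submodule.Quotient.mk_eq_zero] at hq
      rw [Submodule.Quotient.mk_eq_zero]
      rw [Submodule.mem_torsion'_iff] at hq ⊢
      obtain ⟨t, ht⟩ := hq
      exact ⟨t * s, by simpa [mul_smul, Submonoid.smul_def] using ht⟩
    intro a b hab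
    have : (s : R) • (a - b) = 0 := by
      simp only at hab
      rw [smul_sub, hab, sub_self]
    have := hinj _ this
    exact sub_eq_zero.mp this
  · -- surjective
    intro q
    obtain ⟨x, rfl⟩ := Submodule.Quotient.mk_surjective _ q
    obtain ⟨y, hy⟩ := key x s
    refine ⟨Submodule.Quotient.mk y, ?_⟩
    simp only [← Submodule.Quotient.mk_smul]
    rw [Submodule.Quotient.eq]
    rw [Submodule.mem_torsion'_iff]
    refine ⟨r, ?_⟩
    rw [Submonoid.smul_def, smul_sub, hy, sub_self]
end

section
/- Let A• be a complex of R-modules whose cohomology modules are all S-torsion. If for every s ∈ S the complex T_s• ⊗_R A• is acyclic, where T_s• is the two-term complex R →(·s) R, then A• is acyclic. (Key ingredient: for any complex A• and s ∈ S there are natural short exact sequences 0 → H^{n-1}(A•)/s·H^{n-1}(A•) → H^n(T_s• ⊗_R A•) → {x ∈ H^n(A•) : sx = 0} → 0.) -/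
/-- The degree-`n+1` differential of the complex `T_s• ⊗_R A•`, where `T_s•` is the
two-term complex `R →(·s) R` (in degrees 0 and 1) and `A•` is the complex with terms
`X n` and differentials `d n : X n → X (n+1)`.  The degree-`m` term of `T_s• ⊗ A•`
is `X m × X (m-1)`, and the differential sends `(x, y)` to `(d x, s•x - d y)`. -/
def coneD (R : Type) [CommRing R]
    (X : ℤ → Type) [∀ n, AddCommGroup (X n)] [∀ n, Module R (X n)]
    (d : ∀ n, X n →ₗ[R] X (n + 1)) (s : R) (n : ℤ) :
    X (n + 1) × X n →ₗ[R] X (n + 1 + 1) × X (n + 1) :=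
  LinearMap.prod
    ((d (n + 1)).comp (LinearMap.fst R (X (n + 1)) (X n)))
    (s • LinearMap.fst R (X (n + 1)) (X n) - (d n).comp (LinearMap.snd R (X (n + 1)) (X n)))

/-- Let `A•` be a complex of `R`-modules whose cohomology modules are all S-torsion.
If for every `s ∈ S` the complex `T_s• ⊗_R A•` is acyclic, then `A•` is acyclic. -/
theorem acyclic_of_torsion_cohomology_and_cone_acyclic
    (R : Type) [CommRing R] (S : Submonoid R)
    (X : ℤ → Type) [∀ n, AddCommGroup (X n)] [∀ n, Module R (X n)]
    (d : ∀ n, X n →ₗ[R] X (n + 1))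
    (hdd : ∀ n, (d (n + 1)).comp (d n) = 0)
    -- all cohomology modules of `A•` are S-torsion
    (htors : ∀ n, ∀ x ∈ LinearMap.ker (d (n + 1)),
      ∃ s : S, (s : R) • x ∈ LinearMap.range (d n))
    -- for every `s ∈ S`, the complex `T_s• ⊗_R A•` is acyclic
    (hcone : ∀ s : S, ∀ n : ℤ,
      LinearMap.ker (coneD R X d (s : R) (n + 1)) = LinearMap.range (coneD R X d (s : R) n)) :
    ∀ n : ℤ, LinearMap.ker (d (n + 1)) = LinearMap.range (d n) := by
  intro n
  obtain ⟨m, rfl⟩ : ∃ m, n = m + 1 := ⟨n - 1, by omega⟩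
  apply le_antisymm
  · intro x hx
    obtain ⟨s, y, hy⟩ := htors (m + 1) x hx
    have hmem : (x, y) ∈ LinearMap.ker (coneD R X d (s : R) (m + 1)) := by
      simp only [LinearMap.mem_ker] at hx ⊢
      simp [coneD, hx, hy]
    rw [hcone s m] at hmem
    obtain ⟨⟨a, b⟩, hab⟩ := hmem
    simp only [coneD, LinearMap.prod_apply, Prod.mk.injEq, LinearMap.comp_apply,
      LinearMap.fst_apply, Prod.ext_iff] at hab
    exact ⟨a, hab.1⟩
  · rintro x ⟨y, rfl⟩
    have := congrFun (congrArg DFunLike.coe (hdd (m + 1))) y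
    simpa [LinearMap.mem_ker] using this
end
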